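/- Let N ∈ {3,4}, let U_n be the truncated Aubin–Talenti bubbles, and let φ : ℝ^N → ℝ be a bounded measurable function. Then there exists C > 0 such that for all integers n ≥ 1, |∫_{ℝ^N} φ(x) U_n(x) dx| ≤ C · n^{−(N−2)/2} and |∫_{ℝ^N} φ(x) U_n(x)^{2*−1} dx| ≤ C · n^{−(N−2)/2}. -/

import Mathlib

open Real MeasureTheory

noncomputable def twoStar (N : ℕ) : ℝ := 2 * (N : ℝ) / ((N : ℝ) - 2)

noncomputable def bubbleProfile (N n : ℕ) (r : ℝ) : ℝ :=
  if r < 1 then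
    ((N : ℝ) * ((N : ℝ) - 2)) ^ (((N : ℝ) - 2) / 4)
      * ((n : ℝ) / (1 + (n : ℝ) ^ 2 * r ^ 2)) ^ (((N : ℝ) - 2) / 2)
  else if r < 2 then
    ((N : ℝ) * ((N : ℝ) - 2)) ^ (((N : ℝ) - 2) / 4)
      * ((n : ℝ) / (1 + (n : ℝ) ^ 2)) ^ (((N : ℝ) - 2) / 2) * (2 - r)
  else 0

noncomputable def Ubub (N n : ℕ) (x : EuclideanSpace ℝ (Fin N)) : ℝ :=
  bubbleProfile N n ‖x‖

noncomputable def AN (N : ℕ) : ℝ := ((N : ℝ) * ((N : ℝ) - 2)) ^ (((N : ℝ) - 2) / 4)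
noncomputable def sN (N : ℕ) : ℝ := ((N : ℝ) - 2) / 2

lemma AN_nonneg (N : ℕ) (hN : 2 ≤ N) : 0 ≤ AN N := by
  have : (2:ℝ) ≤ (N:ℝ) := by exact_mod_cast hN
  apply Real.rpow_nonneg
  nlinarith

lemma sN_nonneg (N : ℕ) (hN : 2 ≤ N) : 0 ≤ sN N := by
  have : (2:ℝ) ≤ (N:ℝ) := by exact_mod_cast hN
  unfold sN; linarith

lemma measurable_bubbleProfile (N n : ℕ) : Measurable (bubbleProfile N n) := by
  unfold bubbleProfile
  apply Measurable.ite (measurableSet_lt measurable_id measurable_const)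
  · fun_prop
  · apply Measurable.ite (measurableSet_lt measurable_id measurable_const)
    · fun_prop
    · fun_prop

lemma bubbleProfile_nonneg (N n : ℕ) (hN : 2 ≤ N) (r : ℝ) : 0 ≤ bubbleProfile N n r := by
  have h2 : (2:ℝ) ≤ (N:ℝ) := by exact_mod_cast hN
  unfold bubbleProfile
  split_ifs with h1 h2'
  · have hA := AN_nonneg N hN
    unfold AN at hA
    exact mul_nonneg hA (Real.rpow_nonneg (by positivity) _)
  · have hA := AN_nonneg N hN
    unfold AN at hA
    have h2r : (0:ℝ) ≤ 2 - r := by linarith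
    exact mul_nonneg (mul_nonneg hA (Real.rpow_nonneg (by positivity) _)) h2r
  · exact le_refl _

lemma bubbleProfile_le_sup (N n : ℕ) (hN : 2 ≤ N) (r : ℝ) :
    bubbleProfile N n r ≤ AN N * (n:ℝ) ^ (sN N) := by
  have hA := AN_nonneg N hN
  have hs := sN_nonneg N hN
  unfold bubbleProfile
  unfold AN at hA ⊢
  unfold sN at hs ⊢
  split_ifs with hr1 hr2
  · apply mul_le_mul_of_nonneg_left _ hA
    apply Real.rpow_le_rpow (by positivity) _ hs
    exact div_le_self (Nat.cast_nonneg n) (by nlinarith [sq_nonneg ((n:ℝ)*r)])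
  · have h2r : 2 - r ≤ 1 := by linarith [not_lt.1 hr1]
    have hbase : (0:ℝ) ≤ ((n:ℝ) / (1 + (n:ℝ)^2)) ^ (((N:ℝ)-2)/2) := Real.rpow_nonneg (by positivity) _
    calc ((N:ℝ)*((N:ℝ)-2)) ^ (((N:ℝ)-2)/4) * ((n:ℝ)/(1+(n:ℝ)^2)) ^ (((N:ℝ)-2)/2) * (2 - r)
        ≤ ((N:ℝ)*((N:ℝ)-2)) ^ (((N:ℝ)-2)/4) * ((n:ℝ)/(1+(n:ℝ)^2)) ^ (((N:ℝ)-2)/2) * 1 := by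
          apply mul_le_mul_of_nonneg_left h2r (mul_nonneg hA hbase)
      _ = ((N:ℝ)*((N:ℝ)-2)) ^ (((N:ℝ)-2)/4) * ((n:ℝ)/(1+(n:ℝ)^2)) ^ (((N:ℝ)-2)/2) := by ring
      _ ≤ ((N:ℝ)*((N:ℝ)-2)) ^ (((N:ℝ)-2)/4) * (n:ℝ) ^ (((N:ℝ)-2)/2) := by
          apply mul_le_mul_of_nonneg_left _ hA
          apply Real.rpow_le_rpow (by positivity) _ hs
          exact div_le_self (Nat.cast_nonneg n) (by nlinarith)
  · exact mul_nonneg hA (Real.rpow_nonneg (Nat.cast_nonneg n) _)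

lemma div_le_inv_base (n : ℕ) (hn : 1 ≤ n) {c : ℝ} (hc : 0 < c) :
    (n:ℝ) / (1 + (n:ℝ)^2 * c) ≤ ((n:ℝ) * c)⁻¹ := by
  have hn1 : (1:ℝ) ≤ (n:ℝ) := by exact_mod_cast hn
  rw [inv_eq_one_div, div_le_div_iff₀ (by positivity) (by positivity)]
  nlinarith

lemma bubbleProfile_le_mid (N n : ℕ) (hN : 2 ≤ N) (hn : 1 ≤ n) {r : ℝ}
    (h0 : 0 < r) (h1 : r ≤ 1) :
    bubbleProfile N n r ≤ AN N * (n:ℝ) ^ (-sN N) * r ^ (-(2 * sN N)) := by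
  have hA := AN_nonneg N hN
  have hs := sN_nonneg N hN
  have hn1 : (1:ℝ) ≤ (n:ℝ) := by exact_mod_cast hn
  have hn0 : (0:ℝ) < (n:ℝ) := by linarith
  have hrs : r ^ (-(2 * sN N)) = (r^2 : ℝ) ^ (-sN N) := by
    rw [← Real.rpow_natCast r 2, ← Real.rpow_mul h0.le]
    congr 1
    push_cast
    ring
  have key : (n:ℝ) ^ (-sN N) * r ^ (-(2 * sN N)) = ((n:ℝ) * r^2) ^ (-sN N) := by
    rw [hrs, ← Real.mul_rpow (Nat.cast_nonneg n) (by positivity)]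
  rw [mul_assoc, key]
  have hinv : ((n:ℝ) * r^2) ^ (-sN N) = (((n:ℝ) * r^2)⁻¹) ^ (sN N) := by
    rw [Real.rpow_neg (by positivity), ← Real.inv_rpow (by positivity)]
  rw [hinv]
  unfold bubbleProfile
  split_ifs with hr1 hr2
  · unfold AN sN
    apply mul_le_mul_of_nonneg_left _ hA
    apply Real.rpow_le_rpow (by positivity) _ hs
    exact div_le_inv_base n hn (by positivity)
  · have hr : r = 1 := le_antisymm h1 (not_lt.1 hr1)
    subst hr
    unfold AN sN
    rw [show (2:ℝ) - 1 = 1 by norm_num, mul_one]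
    apply mul_le_mul_of_nonneg_left _ hA
    apply Real.rpow_le_rpow (by positivity) _ hs
    have := div_le_inv_base n hn (show (0:ℝ) < 1^2 by norm_num)
    simpa using this
  · exfalso
    exact hr2 (by linarith)

lemma bubbleProfile_le_out (N n : ℕ) (hN : 2 ≤ N) (hn : 1 ≤ n) {r : ℝ} (h1 : 1 ≤ r) :
    bubbleProfile N n r ≤ AN N * (n:ℝ) ^ (-sN N) := by
  have hA := AN_nonneg N hN
  have hs := sN_nonneg N hN
  have hn1 : (1:ℝ) ≤ (n:ℝ) := by exact_mod_cast hn
  have hn0 : (0:ℝ) < (n:ℝ) := by linarith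
  have hinv : (n:ℝ) ^ (-sN N) = ((n:ℝ)⁻¹) ^ (sN N) := by
    rw [Real.rpow_neg (by positivity), ← Real.inv_rpow (by positivity)]
  rw [hinv]
  unfold bubbleProfile
  split_ifs with hr1 hr2
  · exact absurd h1 (by linarith)
  · have h2r : 2 - r ≤ 1 := by linarith
    have hbb : ((n:ℝ)/(1+(n:ℝ)^2)) ^ (((N:ℝ)-2)/2) ≤ ((n:ℝ)⁻¹) ^ (sN N) := by
      unfold sN
      apply Real.rpow_le_rpow (by positivity) _ hs
      have := div_le_inv_base n hn (show (0:ℝ) < 1 by norm_num)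
      simpa using this
    have hbase : (0:ℝ) ≤ ((n:ℝ) / (1 + (n:ℝ)^2)) ^ (((N:ℝ)-2)/2) := Real.rpow_nonneg (by positivity) _
    unfold AN
    calc ((N:ℝ)*((N:ℝ)-2)) ^ (((N:ℝ)-2)/4) * ((n:ℝ)/(1+(n:ℝ)^2)) ^ (((N:ℝ)-2)/2) * (2 - r)
        ≤ ((N:ℝ)*((N:ℝ)-2)) ^ (((N:ℝ)-2)/4) * ((n:ℝ)/(1+(n:ℝ)^2)) ^ (((N:ℝ)-2)/2) * 1 :=
          mul_le_mul_of_nonneg_left h2r (mul_nonneg hA hbase)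
      _ = ((N:ℝ)*((N:ℝ)-2)) ^ (((N:ℝ)-2)/4) * ((n:ℝ)/(1+(n:ℝ)^2)) ^ (((N:ℝ)-2)/2) := by ring
      _ ≤ ((N:ℝ)*((N:ℝ)-2)) ^ (((N:ℝ)-2)/4) * ((n:ℝ)⁻¹) ^ (sN N) :=
          mul_le_mul_of_nonneg_left hbb hA
  · exact mul_nonneg hA (Real.rpow_nonneg (by positivity) _)

lemma bubbleProfile_eq_zero (N n : ℕ) {r : ℝ} (h : 2 ≤ r) : bubbleProfile N n r = 0 := by
  unfold bubbleProfile
  rw [if_neg (by linarith), if_neg (by linarith)]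

open Set in
lemma radial_bound (N n : ℕ) (hN : 2 < N) (hN4 : N ≤ 4) (hn : 1 ≤ n) (t p : ℝ) (ht : 1 ≤ t)
    (hp : p = t * sN N) (hpN : p + sN N ≤ (N:ℝ))
    (hIb : ∫ r in Set.Ioc ((n:ℝ)⁻¹) 1, r ^ ((N:ℝ) - 1 - 2*p) ≤ (n:ℝ) ^ (p - sN N)) :
    ∫ x : EuclideanSpace ℝ (Fin N), (Ubub N n x) ^ t
      ≤ (N:ℝ) * (volume (Metric.ball (0:EuclideanSpace ℝ (Fin N)) 1)).toReal
          * (AN N ^ t) * 10 * (n:ℝ) ^ (-sN N) := by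
  haveI : Nonempty (Fin N) := ⟨⟨0, by omega⟩⟩
  have hN2 : 2 ≤ N := by omega
  have hA := AN_nonneg N hN2
  have hs := sN_nonneg N hN2
  have ht0 : (0:ℝ) < t := by linarith
  have hn1 : (1:ℝ) ≤ (n:ℝ) := by exact_mod_cast hn
  have hn0 : (0:ℝ) < (n:ℝ) := by linarith
  have hinv0 : (0:ℝ) < ((n:ℝ))⁻¹ := by positivity
  have hinv1 : ((n:ℝ))⁻¹ ≤ 1 := by
    rw [inv_le_one_iff₀]; right; exact hn1
  have hp0 : 0 ≤ p := by rw [hp]; positivity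
  -- the radial function
  set g : ℝ → ℝ := fun y => y ^ (N-1) * (bubbleProfile N n y) ^ t with hg
  have hgmeas : Measurable g := by
    apply Measurable.mul (measurable_id.pow_const _)
    exact (measurable_bubbleProfile N n).pow_const t
  have hgnonneg : ∀ y : ℝ, 0 ≤ y → 0 ≤ g y := fun y hy =>
    mul_nonneg (pow_nonneg hy _) (Real.rpow_nonneg (bubbleProfile_nonneg N n hN2 y) _)
  -- polar coordinates
  have hpolar := MeasureTheory.integral_fun_norm_addHaar
      (volume : Measure (EuclideanSpace ℝ (Fin N))) (fun r => (bubbleProfile N n r) ^ t)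
  rw [finrank_euclideanSpace_fin] at hpolar
  have hLHS : ∫ x : EuclideanSpace ℝ (Fin N), (Ubub N n x) ^ t
      = (N:ℝ) * ((volume (Metric.ball (0:EuclideanSpace ℝ (Fin N)) 1)).toReal
          * ∫ y in Ioi (0:ℝ), g y) := by
    unfold Ubub
    rw [hpolar, nsmul_eq_mul, smul_eq_mul]
    simp only [smul_eq_mul]
    rfl
  rw [hLHS]
  -- pointwise bounds on the radial integrand
  have hΘt : ∀ y : ℝ, (bubbleProfile N n y) ^ t ≤ AN N ^ t * (n:ℝ) ^ p := by
    intro y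
    calc (bubbleProfile N n y) ^ t ≤ (AN N * (n:ℝ) ^ sN N) ^ t :=
          Real.rpow_le_rpow (bubbleProfile_nonneg N n hN2 y) (bubbleProfile_le_sup N n hN2 y) ht0.le
      _ = AN N ^ t * (n:ℝ) ^ (sN N * t) := by
          rw [Real.mul_rpow hA (Real.rpow_nonneg hn0.le _), ← Real.rpow_mul hn0.le]
      _ = AN N ^ t * (n:ℝ) ^ p := by rw [hp, mul_comm t (sN N)]
  have hmid : ∀ y ∈ Ioc ((n:ℝ)⁻¹) 1, g y ≤ AN N ^ t * (n:ℝ) ^ (-p) * y ^ ((N:ℝ) - 1 - 2*p) := by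
    intro y hy
    obtain ⟨hy0, hy1⟩ := hy
    have hy0' : (0:ℝ) < y := lt_trans hinv0 hy0
    have hbt : (bubbleProfile N n y) ^ t
        ≤ (AN N * (n:ℝ) ^ (-sN N) * y ^ (-(2 * sN N))) ^ t :=
      Real.rpow_le_rpow (bubbleProfile_nonneg N n hN2 y)
        (bubbleProfile_le_mid N n hN2 hn hy0' hy1) ht0.le
    have he1 : -sN N * t = -p := by rw [hp]; ring
    have he2 : -(2 * sN N) * t = -(2*p) := by rw [hp]; ring
    have heq : (AN N * (n:ℝ) ^ (-sN N) * y ^ (-(2 * sN N))) ^ t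
        = AN N ^ t * (n:ℝ) ^ (-p) * y ^ (-(2*p)) := by
      rw [Real.mul_rpow (mul_nonneg hA (Real.rpow_nonneg hn0.le _)) (Real.rpow_nonneg hy0'.le _),
          Real.mul_rpow hA (Real.rpow_nonneg hn0.le _), ← Real.rpow_mul hn0.le,
          ← Real.rpow_mul hy0'.le, he1, he2]
    have hyy : y ^ (N-1) * y ^ (-(2*p)) = y ^ ((N:ℝ) - 1 - 2*p) := by
      rw [← Real.rpow_natCast y (N-1), ← Real.rpow_add hy0']
      congr 1
      have : ((N - 1 : ℕ) : ℝ) = (N:ℝ) - 1 := by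
        have : 1 ≤ N := by omega
        push_cast [this]
        ring
      rw [this]; ring
    calc g y = y ^ (N-1) * (bubbleProfile N n y) ^ t := rfl
      _ ≤ y ^ (N-1) * (AN N ^ t * (n:ℝ) ^ (-p) * y ^ (-(2*p))) := by
          apply mul_le_mul_of_nonneg_left _ (pow_nonneg hy0'.le _)
          rw [← heq]; exact hbt
      _ = AN N ^ t * (n:ℝ) ^ (-p) * (y ^ (N-1) * y ^ (-(2*p))) := by ring
      _ = AN N ^ t * (n:ℝ) ^ (-p) * y ^ ((N:ℝ) - 1 - 2*p) := by rw [hyy]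
  have hout : ∀ y ∈ Ioc (1:ℝ) 2, g y ≤ 8 * (AN N ^ t * (n:ℝ) ^ (-p)) := by
    intro y hy
    obtain ⟨hy1, hy2⟩ := hy
    have hy0 : (0:ℝ) ≤ y := by linarith
    have hpow : y ^ (N-1) ≤ 8 := by
      calc y ^ (N-1) ≤ 2 ^ (N-1) := pow_le_pow_left₀ hy0 hy2 _
        _ ≤ 2 ^ 3 := pow_le_pow_right₀ one_le_two (by omega)
        _ = 8 := by norm_num
    have hbt : (bubbleProfile N n y) ^ t ≤ AN N ^ t * (n:ℝ) ^ (-p) := by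
      calc (bubbleProfile N n y) ^ t ≤ (AN N * (n:ℝ) ^ (-sN N)) ^ t :=
            Real.rpow_le_rpow (bubbleProfile_nonneg N n hN2 y)
              (bubbleProfile_le_out N n hN2 hn hy1.le) ht0.le
        _ = AN N ^ t * (n:ℝ) ^ (-sN N * t) := by
            rw [Real.mul_rpow hA (Real.rpow_nonneg hn0.le _), ← Real.rpow_mul hn0.le]
        _ = AN N ^ t * (n:ℝ) ^ (-p) := by rw [show -sN N * t = -p by rw [hp]; ring]
    calc g y = y ^ (N-1) * (bubbleProfile N n y) ^ t := rfl
      _ ≤ 8 * (AN N ^ t * (n:ℝ) ^ (-p)) := by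
          apply mul_le_mul hpow hbt (Real.rpow_nonneg (bubbleProfile_nonneg N n hN2 y) _)
          norm_num
  have hzero : ∀ y ∈ Ioi (2:ℝ), g y = 0 := by
    intro y hy
    have : bubbleProfile N n y = 0 := bubbleProfile_eq_zero N n (le_of_lt hy)
    simp [hg, this, Real.zero_rpow (ne_of_gt ht0)]
  -- integrability
  have hint02 : IntegrableOn g (Ioc (0:ℝ) 2) volume := by
    apply Measure.integrableOn_of_bounded (M := 2^(N-1) * (AN N ^ t * (n:ℝ) ^ p))
    · rw [Real.volume_Ioc]; exact ENNReal.ofReal_ne_top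
    · exact hgmeas.aestronglyMeasurable
    · filter_upwards [ae_restrict_mem measurableSet_Ioc] with y hy
      rw [Real.norm_eq_abs, abs_of_nonneg (hgnonneg y hy.1.le)]
      exact mul_le_mul (pow_le_pow_left₀ hy.1.le hy.2 _) (hΘt y)
        (Real.rpow_nonneg (bubbleProfile_nonneg N n hN2 y) _) (by positivity)
  have hs1 : Ioc (0:ℝ) ((n:ℝ)⁻¹) ⊆ Ioc (0:ℝ) 2 := Set.Ioc_subset_Ioc_right (by linarith)
  have hs2 : Ioc ((n:ℝ)⁻¹) 1 ⊆ Ioc (0:ℝ) 2 := Set.Ioc_subset_Ioc (le_of_lt hinv0) one_le_two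
  have hs3 : Ioc (1:ℝ) 2 ⊆ Ioc (0:ℝ) 2 := Set.Ioc_subset_Ioc zero_le_one le_rfl
  have hs4 : Ioc (0:ℝ) 1 ⊆ Ioc (0:ℝ) 2 := Set.Ioc_subset_Ioc_right one_le_two
  have hintIoi2 : IntegrableOn g (Ioi (2:ℝ)) volume :=
    (integrableOn_zero).congr_fun (fun y hy => (hzero y hy).symm) measurableSet_Ioi
  -- splitting
  have e0 : ∫ y in Ioi (0:ℝ), g y = (∫ y in Ioc (0:ℝ) 2, g y) + ∫ y in Ioi (2:ℝ), g y := by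
    rw [← setIntegral_union (Set.Ioc_disjoint_Ioi le_rfl) measurableSet_Ioi hint02 hintIoi2,
        Set.Ioc_union_Ioi_eq_Ioi (by norm_num : (0:ℝ) ≤ 2)]
  have e1 : ∫ y in Ioi (2:ℝ), g y = 0 := by
    rw [setIntegral_congr_fun measurableSet_Ioi hzero]
    simp
  have e2 : ∫ y in Ioc (0:ℝ) 2, g y
      = ((∫ y in Ioc (0:ℝ) ((n:ℝ)⁻¹), g y) + ∫ y in Ioc ((n:ℝ)⁻¹) 1, g y)
        + ∫ y in Ioc (1:ℝ) 2, g y := by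
    rw [← setIntegral_union (Set.Ioc_disjoint_Ioc_of_le le_rfl) measurableSet_Ioc
          (hint02.mono_set hs1) (hint02.mono_set hs2),
        Set.Ioc_union_Ioc_eq_Ioc (le_of_lt hinv0) hinv1,
        ← setIntegral_union (Set.Ioc_disjoint_Ioc_of_le le_rfl) measurableSet_Ioc
          (hint02.mono_set hs4) (hint02.mono_set hs3),
        Set.Ioc_union_Ioc_eq_Ioc zero_le_one one_le_two]
  -- piece 1
  have hI1 : ∫ y in Ioc (0:ℝ) ((n:ℝ)⁻¹), g y ≤ AN N ^ t * (n:ℝ) ^ (-sN N) := by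
    have hle : ∫ y in Ioc (0:ℝ) ((n:ℝ)⁻¹), g y
        ≤ ∫ y in Ioc (0:ℝ) ((n:ℝ)⁻¹), AN N ^ t * (n:ℝ) ^ p * y ^ (N-1) := by
      apply setIntegral_mono_on (hint02.mono_set hs1) _ measurableSet_Ioc
      · intro y hy
        calc g y = y ^ (N-1) * (bubbleProfile N n y) ^ t := rfl
          _ ≤ y ^ (N-1) * (AN N ^ t * (n:ℝ) ^ p) :=
              mul_le_mul_of_nonneg_left (hΘt y) (pow_nonneg hy.1.le _)
          _ = AN N ^ t * (n:ℝ) ^ p * y ^ (N-1) := by ring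
      · exact (continuous_const.mul (continuous_pow _)).integrableOn_Ioc
    have hval : ∫ y in Ioc (0:ℝ) ((n:ℝ)⁻¹), AN N ^ t * (n:ℝ) ^ p * y ^ (N-1)
        = AN N ^ t * (n:ℝ) ^ p * (((n:ℝ)⁻¹) ^ N / N) := by
      rw [← intervalIntegral.integral_of_le (le_of_lt hinv0),
          intervalIntegral.integral_const_mul, integral_pow]
      have hNm : N - 1 + 1 = N := by omega
      rw [hNm, zero_pow (by omega : N ≠ 0)]
      have hcast : ((N - 1 : ℕ) : ℝ) = (N:ℝ) - 1 := by
        have h1 : 1 ≤ N := by omega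
        push_cast [h1]
        ring
      rw [hcast]
      ring_nf
    have hfin : AN N ^ t * (n:ℝ) ^ p * (((n:ℝ)⁻¹) ^ N / N) ≤ AN N ^ t * (n:ℝ) ^ (-sN N) := by
      have h1 : ((n:ℝ)⁻¹) ^ N = ((n:ℝ) ^ ((N:ℕ):ℝ))⁻¹ := by
        rw [Real.rpow_natCast, inv_pow]
      have h2 : (n:ℝ) ^ p * ((n:ℝ) ^ ((N:ℕ):ℝ))⁻¹ = (n:ℝ) ^ (p - (N:ℝ)) := by
        rw [Real.rpow_sub hn0, div_eq_mul_inv]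
      have h3 : (n:ℝ) ^ (p - (N:ℝ)) ≤ (n:ℝ) ^ (-sN N) :=
        Real.rpow_le_rpow_of_exponent_le hn1 (by linarith)
      have hAt : (0:ℝ) ≤ AN N ^ t := Real.rpow_nonneg hA _
      have hN1 : (1:ℝ) ≤ (N:ℝ) := by exact_mod_cast (by omega : 1 ≤ N)
      calc AN N ^ t * (n:ℝ) ^ p * (((n:ℝ)⁻¹) ^ N / N)
          = AN N ^ t * ((n:ℝ) ^ p * ((n:ℝ) ^ ((N:ℕ):ℝ))⁻¹) / N := by rw [h1]; ring
        _ = AN N ^ t * (n:ℝ) ^ (p - (N:ℝ)) / N := by rw [h2]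
        _ ≤ AN N ^ t * (n:ℝ) ^ (-sN N) / N := by
            apply div_le_div_of_nonneg_right _ (by linarith)
            exact mul_le_mul_of_nonneg_left h3 hAt
        _ ≤ AN N ^ t * (n:ℝ) ^ (-sN N) := by
            apply div_le_self (mul_nonneg hAt (Real.rpow_nonneg hn0.le _)) hN1
    linarith [hle, hval ▸ hle]
  -- piece 2
  have hI2 : ∫ y in Ioc ((n:ℝ)⁻¹) 1, g y ≤ AN N ^ t * (n:ℝ) ^ (-sN N) := by
    have hintmid : IntegrableOn (fun y : ℝ => AN N ^ t * (n:ℝ) ^ (-p) * y ^ ((N:ℝ) - 1 - 2*p))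
        (Ioc ((n:ℝ)⁻¹) 1) volume := by
      apply IntegrableOn.mono_set _ (Set.Ioc_subset_Icc_self)
      apply ContinuousOn.integrableOn_Icc
      apply ContinuousOn.mul continuousOn_const
      apply ContinuousOn.rpow_const continuousOn_id
      intro x hx
      exact Or.inl (ne_of_gt (lt_of_lt_of_le hinv0 hx.1))
    have hle := setIntegral_mono_on (hint02.mono_set hs2) hintmid measurableSet_Ioc hmid
    have hmul : ∫ y in Ioc ((n:ℝ)⁻¹) 1, AN N ^ t * (n:ℝ) ^ (-p) * y ^ ((N:ℝ) - 1 - 2*p)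
        = AN N ^ t * (n:ℝ) ^ (-p) * ∫ y in Ioc ((n:ℝ)⁻¹) 1, y ^ ((N:ℝ) - 1 - 2*p) :=
      integral_const_mul _ _
    have hAt : (0:ℝ) ≤ AN N ^ t := Real.rpow_nonneg hA _
    calc ∫ y in Ioc ((n:ℝ)⁻¹) 1, g y
        ≤ AN N ^ t * (n:ℝ) ^ (-p) * ∫ y in Ioc ((n:ℝ)⁻¹) 1, y ^ ((N:ℝ) - 1 - 2*p) := by
          rw [← hmul]; exact hle
      _ ≤ AN N ^ t * (n:ℝ) ^ (-p) * (n:ℝ) ^ (p - sN N) := by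
          apply mul_le_mul_of_nonneg_left hIb
          exact mul_nonneg hAt (Real.rpow_nonneg hn0.le _)
      _ = AN N ^ t * (n:ℝ) ^ (-sN N) := by
          rw [mul_assoc, ← Real.rpow_add hn0]
          congr 2
          ring
  -- piece 3
  have hI3 : ∫ y in Ioc (1:ℝ) 2, g y ≤ 8 * (AN N ^ t * (n:ℝ) ^ (-sN N)) := by
    have hAt : (0:ℝ) ≤ AN N ^ t := Real.rpow_nonneg hA _
    have hps : sN N ≤ p := by
      rw [hp]
      nlinarith
    have hle := setIntegral_mono_on (hint02.mono_set hs3)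
      (integrableOn_const (by rw [Real.volume_Ioc]; exact ENNReal.ofReal_ne_top))
      measurableSet_Ioc hout
    calc ∫ y in Ioc (1:ℝ) 2, g y
        ≤ ∫ _ in Ioc (1:ℝ) 2, 8 * (AN N ^ t * (n:ℝ) ^ (-p)) := hle
      _ = 8 * (AN N ^ t * (n:ℝ) ^ (-p)) := by
          rw [setIntegral_const, Real.volume_real_Ioc]
          norm_num
      _ ≤ 8 * (AN N ^ t * (n:ℝ) ^ (-sN N)) := by
          apply mul_le_mul_of_nonneg_left _ (by norm_num)
          apply mul_le_mul_of_nonneg_left _ hAt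
          exact Real.rpow_le_rpow_of_exponent_le hn1 (by linarith)
  -- combine
  have hJ : ∫ y in Ioi (0:ℝ), g y ≤ AN N ^ t * 10 * (n:ℝ) ^ (-sN N) := by
    rw [e0, e1, e2]
    have : AN N ^ t * 10 * (n:ℝ) ^ (-sN N)
        = (AN N ^ t * (n:ℝ) ^ (-sN N)) + (AN N ^ t * (n:ℝ) ^ (-sN N))
          + 8 * (AN N ^ t * (n:ℝ) ^ (-sN N)) := by ring
    rw [this]
    linarith
  have hc : (0:ℝ) ≤ (volume (Metric.ball (0:EuclideanSpace ℝ (Fin N)) 1)).toReal :=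
    ENNReal.toReal_nonneg
  calc (N:ℝ) * ((volume (Metric.ball (0:EuclideanSpace ℝ (Fin N)) 1)).toReal
          * ∫ y in Ioi (0:ℝ), g y)
      ≤ (N:ℝ) * ((volume (Metric.ball (0:EuclideanSpace ℝ (Fin N)) 1)).toReal
          * (AN N ^ t * 10 * (n:ℝ) ^ (-sN N))) := by
        apply mul_le_mul_of_nonneg_left (mul_le_mul_of_nonneg_left hJ hc) (Nat.cast_nonneg N)
    _ = (N:ℝ) * (volume (Metric.ball (0:EuclideanSpace ℝ (Fin N)) 1)).toReal
          * (AN N ^ t) * 10 * (n:ℝ) ^ (-sN N) := by ring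

lemma Ib_case1 (n : ℕ) (hn : 1 ≤ n) :
    ∫ r in Set.Ioc ((n:ℝ)⁻¹) 1, r ^ (1:ℝ) ≤ (n:ℝ) ^ (0:ℝ) := by
  have hn1 : (1:ℝ) ≤ (n:ℝ) := by exact_mod_cast hn
  have hinv1 : ((n:ℝ))⁻¹ ≤ 1 := by rw [inv_le_one_iff₀]; right; exact hn1
  rw [Real.rpow_zero, ← intervalIntegral.integral_of_le hinv1,
      integral_rpow (Or.inl (by norm_num))]
  have h0 : (0:ℝ) ≤ ((n:ℝ)⁻¹) ^ ((1:ℝ)+1) := Real.rpow_nonneg (by positivity) _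
  rw [Real.one_rpow]
  linarith

lemma Ib_case2 (n : ℕ) (hn : 1 ≤ n) :
    ∫ r in Set.Ioc ((n:ℝ)⁻¹) 1, r ^ (-3:ℝ) ≤ (n:ℝ) ^ (2:ℝ) := by
  have hn1 : (1:ℝ) ≤ (n:ℝ) := by exact_mod_cast hn
  have hn0 : (0:ℝ) < (n:ℝ) := by linarith
  have hinv0 : (0:ℝ) < ((n:ℝ))⁻¹ := by positivity
  have hinv1 : ((n:ℝ))⁻¹ ≤ 1 := by rw [inv_le_one_iff₀]; right; exact hn1
  rw [← intervalIntegral.integral_of_le hinv1,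
      integral_rpow (Or.inr ⟨by norm_num, Set.notMem_uIcc_of_lt hinv0 one_pos⟩)]
  have hval : ((n:ℝ)⁻¹) ^ ((-3:ℝ)+1) = (n:ℝ) ^ (2:ℝ) := by
    rw [show ((-3:ℝ)+1) = -(2:ℝ) by norm_num, Real.inv_rpow hn0.le,
        Real.rpow_neg hn0.le, inv_inv]
  rw [hval, Real.one_rpow]
  have h2 : (0:ℝ) ≤ (n:ℝ) ^ (2:ℝ) := Real.rpow_nonneg hn0.le _
  rw [show ((-3:ℝ)+1) = -(2:ℝ) by norm_num]
  rw [div_le_iff_of_neg (by norm_num : (-2:ℝ) < 0)]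
  generalize hT : (n:ℝ) ^ (2:ℝ) = T at h2 ⊢
  linarith

open Set in
lemma abs_integral_le (N n : ℕ) (hN : 2 < N) (hN4 : N ≤ 4) (hn : 1 ≤ n)
    (φ : EuclideanSpace ℝ (Fin N) → ℝ) (hφmeas : Measurable φ) (M' : ℝ) (hM' : 0 ≤ M')
    (hφbdd : ∀ x, |φ x| ≤ M') (t p : ℝ) (ht : 1 ≤ t) (hp : p = t * sN N)
    (hpN : p + sN N ≤ (N:ℝ))
    (hIb : ∫ r in Set.Ioc ((n:ℝ)⁻¹) 1, r ^ ((N:ℝ) - 1 - 2*p) ≤ (n:ℝ) ^ (p - sN N)) :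
    |∫ x : EuclideanSpace ℝ (Fin N), φ x * (Ubub N n x) ^ t|
      ≤ M' * ((N:ℝ) * (volume (Metric.ball (0:EuclideanSpace ℝ (Fin N)) 1)).toReal
          * (AN N ^ t) * 10) * (n:ℝ) ^ (-sN N) := by
  have hN2 : 2 ≤ N := by omega
  have hA := AN_nonneg N hN2
  have hn1 : (1:ℝ) ≤ (n:ℝ) := by exact_mod_cast hn
  have hn0 : (0:ℝ) < (n:ℝ) := by linarith
  have ht0 : (0:ℝ) < t := by linarith
  have hU0 : ∀ x : EuclideanSpace ℝ (Fin N), 0 ≤ (Ubub N n x) ^ t := fun x =>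
    Real.rpow_nonneg (bubbleProfile_nonneg N n hN2 _) _
  have hUmeas : Measurable fun x : EuclideanSpace ℝ (Fin N) => (Ubub N n x) ^ t :=
    ((measurable_bubbleProfile N n).comp measurable_norm).pow_const t
  have hΘt : ∀ x : EuclideanSpace ℝ (Fin N), (Ubub N n x) ^ t ≤ AN N ^ t * (n:ℝ) ^ (t * sN N) := by
    intro x
    calc (Ubub N n x) ^ t ≤ (AN N * (n:ℝ) ^ sN N) ^ t :=
          Real.rpow_le_rpow (bubbleProfile_nonneg N n hN2 _)
            (bubbleProfile_le_sup N n hN2 _) ht0.le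
      _ = AN N ^ t * (n:ℝ) ^ (sN N * t) := by
          rw [Real.mul_rpow hA (Real.rpow_nonneg hn0.le _), ← Real.rpow_mul hn0.le]
      _ = AN N ^ t * (n:ℝ) ^ (t * sN N) := by rw [mul_comm (sN N) t]
  have hintU : Integrable (fun x : EuclideanSpace ℝ (Fin N) => (Ubub N n x) ^ t) := by
    refine Integrable.mono'
      (g := (Metric.closedBall (0:EuclideanSpace ℝ (Fin N)) 2).indicator
        (fun _ => AN N ^ t * (n:ℝ) ^ (t * sN N)))
      ((integrable_indicator_iff measurableSet_closedBall).2
        (integrableOn_const measure_closedBall_lt_top.ne))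
      hUmeas.aestronglyMeasurable (Filter.Eventually.of_forall fun x => ?_)
    rw [Real.norm_eq_abs, abs_of_nonneg (hU0 x)]
    by_cases hx : x ∈ Metric.closedBall (0:EuclideanSpace ℝ (Fin N)) 2
    · rw [Set.indicator_of_mem hx]
      exact hΘt x
    · rw [Set.indicator_of_notMem hx]
      have h2 : (2:ℝ) ≤ ‖x‖ := by
        rw [Metric.mem_closedBall, dist_zero_right] at hx
        linarith [not_le.1 hx]
      rw [Ubub, bubbleProfile_eq_zero N n h2, Real.zero_rpow (ne_of_gt ht0)]
  have hMint : Integrable (fun x : EuclideanSpace ℝ (Fin N) => M' * (Ubub N n x) ^ t) :=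
    hintU.const_mul M'
  have hφU : Integrable (fun x : EuclideanSpace ℝ (Fin N) => φ x * (Ubub N n x) ^ t) :=
    hintU.bdd_mul hφmeas.aestronglyMeasurable
      (Filter.Eventually.of_forall fun x => by rw [Real.norm_eq_abs]; exact hφbdd x)
  calc |∫ x : EuclideanSpace ℝ (Fin N), φ x * (Ubub N n x) ^ t|
      ≤ ∫ x : EuclideanSpace ℝ (Fin N), ‖φ x * (Ubub N n x) ^ t‖ := by
        rw [← Real.norm_eq_abs]
        exact norm_integral_le_integral_norm _
    _ ≤ ∫ x : EuclideanSpace ℝ (Fin N), M' * (Ubub N n x) ^ t := by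
        apply integral_mono hφU.norm hMint
        intro x
        show ‖φ x * (Ubub N n x) ^ t‖ ≤ M' * (Ubub N n x) ^ t
        rw [Real.norm_eq_abs, abs_mul, abs_of_nonneg (hU0 x)]
        exact mul_le_mul_of_nonneg_right (hφbdd x) (hU0 x)
    _ = M' * ∫ x : EuclideanSpace ℝ (Fin N), (Ubub N n x) ^ t := integral_const_mul _ _
    _ ≤ M' * ((N:ℝ) * (volume (Metric.ball (0:EuclideanSpace ℝ (Fin N)) 1)).toReal
          * (AN N ^ t) * 10 * (n:ℝ) ^ (-sN N)) :=
        mul_le_mul_of_nonneg_left (radial_bound N n hN hN4 hn t p ht hp hpN hIb) hM'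
    _ = M' * ((N:ℝ) * (volume (Metric.ball (0:EuclideanSpace ℝ (Fin N)) 1)).toReal
          * (AN N ^ t) * 10) * (n:ℝ) ^ (-sN N) := by ring

theorem stmt_10 (N : ℕ) (hN : N = 3 ∨ N = 4)
    (φ : EuclideanSpace ℝ (Fin N) → ℝ) (hφmeas : Measurable φ)
    (M : ℝ) (hφbdd : ∀ x, |φ x| ≤ M) :
    ∃ C : ℝ, 0 < C ∧ ∀ n : ℕ, 1 ≤ n →
      |∫ x : EuclideanSpace ℝ (Fin N), φ x * Ubub N n x|
          ≤ C * (n : ℝ) ^ (-(((N : ℝ) - 2) / 2)) ∧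
      |∫ x : EuclideanSpace ℝ (Fin N), φ x * (Ubub N n x) ^ (twoStar N - 1)|
          ≤ C * (n : ℝ) ^ (-(((N : ℝ) - 2) / 2)) := by
  rcases hN with rfl | rfl
  ·
    have hM : (0:ℝ) ≤ M := le_trans (abs_nonneg _) (hφbdd 0)
    have hM1 : (0:ℝ) < M + 1 := by linarith
    have hA := AN_nonneg 3 (by norm_num)
    have hK0 : (0:ℝ) ≤ ((3:ℕ):ℝ)
        * (volume (Metric.ball (0:EuclideanSpace ℝ (Fin 3)) 1)).toReal :=
      mul_nonneg (by norm_num) ENNReal.toReal_nonneg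
    have t1 : (0:ℝ) ≤ (M+1) * (((3:ℕ):ℝ)
        * (volume (Metric.ball (0:EuclideanSpace ℝ (Fin 3)) 1)).toReal * AN 3 * 10) :=
      mul_nonneg hM1.le (mul_nonneg (mul_nonneg hK0 hA) (by norm_num))
    have t2 : (0:ℝ) ≤ (M+1) * (((3:ℕ):ℝ)
        * (volume (Metric.ball (0:EuclideanSpace ℝ (Fin 3)) 1)).toReal * AN 3 ^ (5:ℝ) * 10) :=
      mul_nonneg hM1.le (mul_nonneg (mul_nonneg hK0 (Real.rpow_nonneg hA _)) (by norm_num))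
    refine ⟨(M+1) * (((3:ℕ):ℝ)
        * (volume (Metric.ball (0:EuclideanSpace ℝ (Fin 3)) 1)).toReal * AN 3 * 10)
      + (M+1) * (((3:ℕ):ℝ)
        * (volume (Metric.ball (0:EuclideanSpace ℝ (Fin 3)) 1)).toReal * AN 3 ^ (5:ℝ) * 10)
      + 1, by linarith, ?_⟩
    intro n hn
    have hnn : (0:ℝ) ≤ (n:ℝ) ^ (-((((3:ℕ):ℝ) - 2) / 2)) :=
      Real.rpow_nonneg (Nat.cast_nonneg n) _
    have hexp : -sN 3 = -((((3:ℕ):ℝ) - 2) / 2) := rfl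
    constructor
    · have h1 := abs_integral_le 3 n (by norm_num) (by norm_num) hn φ hφmeas (M+1)
        (by linarith) (fun x => le_trans (hφbdd x) (by linarith)) 1 (1 * sN 3) le_rfl rfl
        (by norm_num [sN])
        (by
          have e2 : 1 * sN 3 - sN 3 = 0 := by ring
          rw [e2]
          have e1 : ((3:ℕ):ℝ) - 1 - 2*(1 * sN 3) = 1 := by norm_num [sN]
          simp only [e1]
          exact Ib_case1 n hn)
      simp only [Real.rpow_one] at h1
      rw [hexp] at h1
      refine le_trans h1 (mul_le_mul_of_nonneg_right ?_ hnn)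
      linarith
    · have hts : twoStar 3 - 1 = (5:ℝ) := by unfold twoStar; norm_num
      simp only [hts]
      have h2 := abs_integral_le 3 n (by norm_num) (by norm_num) hn φ hφmeas (M+1)
        (by linarith) (fun x => le_trans (hφbdd x) (by linarith)) (5:ℝ) ((5:ℝ) * sN 3)
        (by norm_num) rfl
        (by norm_num [sN])
        (by
          have e2 : (5:ℝ) * sN 3 - sN 3 = 2 := by norm_num [sN]
          rw [e2]
          have e1 : ((3:ℕ):ℝ) - 1 - 2*((5:ℝ) * sN 3) = -3 := by norm_num [sN]
          simp only [e1]
          exact Ib_case2 n hn)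
      rw [hexp] at h2
      refine le_trans h2 (mul_le_mul_of_nonneg_right ?_ hnn)
      linarith
  ·
    have hM : (0:ℝ) ≤ M := le_trans (abs_nonneg _) (hφbdd 0)
    have hM1 : (0:ℝ) < M + 1 := by linarith
    have hA := AN_nonneg 4 (by norm_num)
    have hK0 : (0:ℝ) ≤ ((4:ℕ):ℝ)
        * (volume (Metric.ball (0:EuclideanSpace ℝ (Fin 4)) 1)).toReal :=
      mul_nonneg (by norm_num) ENNReal.toReal_nonneg
    have t1 : (0:ℝ) ≤ (M+1) * (((4:ℕ):ℝ)
        * (volume (Metric.ball (0:EuclideanSpace ℝ (Fin 4)) 1)).toReal * AN 4 * 10) :=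
      mul_nonneg hM1.le (mul_nonneg (mul_nonneg hK0 hA) (by norm_num))
    have t2 : (0:ℝ) ≤ (M+1) * (((4:ℕ):ℝ)
        * (volume (Metric.ball (0:EuclideanSpace ℝ (Fin 4)) 1)).toReal * AN 4 ^ (3:ℝ) * 10) :=
      mul_nonneg hM1.le (mul_nonneg (mul_nonneg hK0 (Real.rpow_nonneg hA _)) (by norm_num))
    refine ⟨(M+1) * (((4:ℕ):ℝ)
        * (volume (Metric.ball (0:EuclideanSpace ℝ (Fin 4)) 1)).toReal * AN 4 * 10)
      + (M+1) * (((4:ℕ):ℝ)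
        * (volume (Metric.ball (0:EuclideanSpace ℝ (Fin 4)) 1)).toReal * AN 4 ^ (3:ℝ) * 10)
      + 1, by linarith, ?_⟩
    intro n hn
    have hnn : (0:ℝ) ≤ (n:ℝ) ^ (-((((4:ℕ):ℝ) - 2) / 2)) :=
      Real.rpow_nonneg (Nat.cast_nonneg n) _
    have hexp : -sN 4 = -((((4:ℕ):ℝ) - 2) / 2) := rfl
    constructor
    · have h1 := abs_integral_le 4 n (by norm_num) (by norm_num) hn φ hφmeas (M+1)
        (by linarith) (fun x => le_trans (hφbdd x) (by linarith)) 1 (1 * sN 4) le_rfl rfl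
        (by norm_num [sN])
        (by
          have e2 : 1 * sN 4 - sN 4 = 0 := by ring
          rw [e2]
          have e1 : ((4:ℕ):ℝ) - 1 - 2*(1 * sN 4) = 1 := by norm_num [sN]
          simp only [e1]
          exact Ib_case1 n hn)
      simp only [Real.rpow_one] at h1
      rw [hexp] at h1
      refine le_trans h1 (mul_le_mul_of_nonneg_right ?_ hnn)
      linarith
    · have hts : twoStar 4 - 1 = (3:ℝ) := by unfold twoStar; norm_num
      simp only [hts]
      have h2 := abs_integral_le 4 n (by norm_num) (by norm_num) hn φ hφmeas (M+1)
        (by linarith) (fun x => le_trans (hφbdd x) (by linarith)) (3:ℝ) ((3:ℝ) * sN 4)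
        (by norm_num) rfl
        (by norm_num [sN])
        (by
          have e2 : (3:ℝ) * sN 4 - sN 4 = 2 := by norm_num [sN]
          rw [e2]
          have e1 : ((4:ℕ):ℝ) - 1 - 2*((3:ℝ) * sN 4) = -3 := by norm_num [sN]
          simp only [e1]
          exact Ib_case2 n hn)
      rw [hexp] at h2
      refine le_trans h2 (mul_le_mul_of_nonneg_right ?_ hnn)
      linarith
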